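/- Let b̃ : ℝ^d × ℝ^d → ℝ^d be bounded and Lipschitz continuous (jointly in both variables). Let (Ω, 𝒜, ℙ) be a probability space and let W : Ω → Ω_T and ξ : Ω → ℝ^d be measurable (for instance W a Brownian motion with continuous paths). Then there exists a measurable map X : Ω → Ω_T such that, denoting by μ^X ∈ 𝒫(Ω_T) the law of X and by μ^X_s its time-s marginal, ℙ-almost surely for all t ∈ [0,T]: X_t = ξ + W_t + ∫₀ᵗ ( ∫_{ℝ^d} b̃(X_s, y) μ^X_s(dy) ) ds. Moreover the solution is unique: if X' : Ω → Ω_T is another measurable map satisfying the same equation with its own law μ^{X'}, then law(X') = law(X) and X' = X ℙ-almost surely. -/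

import Mathlib

set_option maxHeartbeats 1000000


open MeasureTheory Set

noncomputable section

/-- Euclidean space `ℝ^d`. -/
abbrev Euc (d : ℕ) := EuclideanSpace ℝ (Fin d)

/-- The canonical path space `Ω_T = C([0,T]; ℝ^d)`. -/
abbrev PathSpace (d : ℕ) (T : ℝ) := C(Set.Icc (0:ℝ) T, Euc d)

instance (d : ℕ) (T : ℝ) : MeasurableSpace (PathSpace d T) := borel _
instance (d : ℕ) (T : ℝ) : BorelSpace (PathSpace d T) := ⟨rfl⟩

/-- Evaluation of a path at time `s ∈ [0,T]` (times outside `[0,T]` are clamped). -/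
def evalAt {d : ℕ} {T : ℝ} (hT : 0 ≤ T) (s : ℝ) (ω : PathSpace d T) : Euc d :=
  ω (Set.projIcc 0 T hT s)

namespace Szn

open Filter Topology

variable {d : ℕ} {T : ℝ} {Ω : Type} [MeasurableSpace Ω]

lemma continuous_evalAt_path (hT : 0 ≤ T) (x : PathSpace d T) :
    Continuous fun s : ℝ => evalAt hT s x :=
  x.continuous.comp continuous_projIcc

lemma continuous_evalAt (hT : 0 ≤ T) (s : ℝ) :
    Continuous (evalAt (d := d) hT s) :=
  ContinuousEvalConst.continuous_eval_const _

lemma measurable_evalAt (hT : 0 ≤ T) (s : ℝ) :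
    Measurable (evalAt (d := d) hT s) :=
  (continuous_evalAt hT s).measurable

lemma dist_evalAt_le (hT : 0 ≤ T) (s : ℝ) (x y : PathSpace d T) :
    dist (evalAt hT s x) (evalAt hT s y) ≤ dist x y :=
  ContinuousMap.dist_apply_le_dist _

lemma evalAt_of_mem (hT : 0 ≤ T) {t : ℝ} (ht : t ∈ Set.Icc (0:ℝ) T) (x : PathSpace d T) :
    evalAt hT t x = x ⟨t, ht⟩ := by
  simp [evalAt, Set.projIcc_of_mem hT ht]

/-- The mean-field drift associated to a random path `X`. -/
def drift (hT : 0 ≤ T) (btilde : Euc d × Euc d → Euc d) (ℙ : Measure Ω)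
    (X : Ω → PathSpace d T) (z : Euc d) (s : ℝ) : Euc d :=
  ∫ ω', btilde (z, evalAt hT s (X ω')) ∂ℙ

/-- The drift evaluated along a path `x`. -/
def vel (hT : 0 ≤ T) (btilde : Euc d × Euc d → Euc d) (ℙ : Measure Ω)
    (X : Ω → PathSpace d T) (x : PathSpace d T) (s : ℝ) : Euc d :=
  drift hT btilde ℙ X (evalAt hT s x) s

variable (hT : 0 ≤ T) {btilde : Euc d × Euc d → Euc d} {ℙ : Measure Ω}
  [IsProbabilityMeasure ℙ] {K Λ : ℝ}

section lemmas

variable (hb : Continuous btilde) (hbdd : ∀ p, ‖btilde p‖ ≤ K)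
  (hlip : ∀ p q, ‖btilde p - btilde q‖ ≤ Λ * dist p q) (hK : 0 ≤ K) (hΛ : 0 ≤ Λ)
  {X Y : Ω → PathSpace d T}

include hb in
lemma drift_aesm (hX : Measurable X) (z : Euc d) (s : ℝ) :
    AEStronglyMeasurable (fun ω' => btilde (z, evalAt hT s (X ω'))) ℙ :=
  ((hb.comp (Continuous.prodMk_right z)).measurable.comp
    ((measurable_evalAt hT s).comp hX)).aestronglyMeasurable

include hb hbdd in
lemma drift_integrable (hX : Measurable X) (z : Euc d) (s : ℝ) :
    Integrable (fun ω' => btilde (z, evalAt hT s (X ω'))) ℙ :=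
  Integrable.mono' (integrable_const K) (drift_aesm hT hb hX z s)
    (Filter.Eventually.of_forall fun ω' => hbdd _)

include hbdd in
lemma drift_norm_le (z : Euc d) (s : ℝ) : ‖drift hT btilde ℙ X z s‖ ≤ K := by
  have := norm_integral_le_of_norm_le_const (μ := ℙ)
    (f := fun ω' => btilde (z, evalAt hT s (X ω')))
    (Filter.Eventually.of_forall fun ω' => hbdd _)
  simpa [drift] using this

include hbdd in
lemma vel_norm_le (x : PathSpace d T) (s : ℝ) : ‖vel hT btilde ℙ X x s‖ ≤ K :=
  drift_norm_le hT hbdd _ _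

include hb hbdd hlip hΛ in
lemma drift_dist_le (hX : Measurable X) (hY : Measurable Y) (z z' : Euc d) (s : ℝ)
    {ρ : ℝ} (hρ : ∀ᵐ ω' ∂ℙ, dist (evalAt hT s (X ω')) (evalAt hT s (Y ω')) ≤ ρ) :
    ‖drift hT btilde ℙ X z s - drift hT btilde ℙ Y z' s‖ ≤ Λ * (dist z z' + ρ) := by
  rw [drift, drift,
    ← integral_sub (drift_integrable hT hb hbdd hX z s) (drift_integrable hT hb hbdd hY z' s)]
  have h : ∀ᵐ ω' ∂ℙ,
      ‖btilde (z, evalAt hT s (X ω')) - btilde (z', evalAt hT s (Y ω'))‖ ≤ Λ * (dist z z' + ρ) := by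
    filter_upwards [hρ] with ω' hω'
    refine (hlip _ _).trans ?_
    apply mul_le_mul_of_nonneg_left _ hΛ
    rw [Prod.dist_eq]
    have h0ρ : (0:ℝ) ≤ ρ := le_trans dist_nonneg hω'
    exact max_le (le_add_of_nonneg_right h0ρ) (hω'.trans (le_add_of_nonneg_left dist_nonneg))
  simpa using norm_integral_le_of_norm_le_const h

include hb hbdd in
lemma vel_continuous (hX : Measurable X) (x : PathSpace d T) :
    Continuous (vel hT btilde ℙ X x) := by
  apply continuous_of_dominated (bound := fun _ => K)
  · exact fun s => drift_aesm hT hb hX _ s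
  · exact fun s => Filter.Eventually.of_forall fun ω' => hbdd _
  · exact integrable_const K
  · refine Filter.Eventually.of_forall fun ω' => ?_
    exact hb.comp ((continuous_evalAt_path hT x).prodMk (continuous_evalAt_path hT (X ω')))

end lemmas

section lemmas2

variable (hb : Continuous btilde) (hbdd : ∀ p, ‖btilde p‖ ≤ K)
  (hlip : ∀ p q, ‖btilde p - btilde q‖ ≤ Λ * dist p q) (hK : 0 ≤ K) (hΛ : 0 ≤ Λ)
  {X Y : Ω → PathSpace d T}

omit [IsProbabilityMeasure ℙ] in
lemma setIcc_eq_interval {f : ℝ → Euc d} {t : ℝ} (ht : 0 ≤ t) :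
    ∫ s in Set.Icc (0:ℝ) t, f s = ∫ s in (0:ℝ)..t, f s := by
  rw [MeasureTheory.integral_Icc_eq_integral_Ioc, intervalIntegral.integral_of_le ht]

/-- Lipschitz bound for the primitive of a bounded function. -/
lemma prim_lipschitz {f : ℝ → Euc d} (hf : Continuous f) (hKf : ∀ s, ‖f s‖ ≤ K)
    {t₁ t₂ : ℝ} (h0 : 0 ≤ t₁) (h12 : t₁ ≤ t₂) :
    dist (∫ s in Set.Icc (0:ℝ) t₂, f s) (∫ s in Set.Icc (0:ℝ) t₁, f s) ≤ K * (t₂ - t₁) := by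
  rw [setIcc_eq_interval h0, setIcc_eq_interval (h0.trans h12), dist_eq_norm,
    intervalIntegral.integral_interval_sub_left (hf.intervalIntegrable _ _)
      (hf.intervalIntegrable _ _)]
  have := intervalIntegral.norm_integral_le_of_norm_le_const
    (C := K) (f := f) (a := t₁) (b := t₂) (fun x _ => hKf x)
  rwa [abs_of_nonneg (by linarith)] at this

/-- Totalized constructor of a continuous path. -/
def mkPath (f : Set.Icc (0:ℝ) T → Euc d) : PathSpace d T :=
  @dite _ (Continuous f) (Classical.dec _) (fun h => ⟨f, h⟩) (fun _ => ⟨fun _ => 0, continuous_const⟩)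

lemma mkPath_apply {f : Set.Icc (0:ℝ) T → Euc d} (hf : Continuous f) (t : Set.Icc (0:ℝ) T) :
    mkPath f t = f t := by rw [mkPath, dif_pos hf]; rfl

/-- The Picard/Sznitman map on random paths. -/
def Tmap (hT : 0 ≤ T) (btilde : Euc d × Euc d → Euc d) (ℙ : Measure Ω)
    (ξ : Ω → Euc d) (W : Ω → PathSpace d T) (X : Ω → PathSpace d T) (ω : Ω) : PathSpace d T :=
  mkPath fun t => ξ ω + W ω t + ∫ s in Set.Icc (0:ℝ) (t:ℝ), vel hT btilde ℙ X (X ω) s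

include hb hbdd hK in
lemma prim_cont (hX : Measurable X) (x : PathSpace d T) :
    Continuous fun t : Set.Icc (0:ℝ) T =>
      ∫ s in Set.Icc (0:ℝ) (t:ℝ), vel hT btilde ℙ X x s := by
  have hv := vel_continuous (ℙ := ℙ) hT hb hbdd hX x
  have hvb := vel_norm_le hT hbdd (ℙ := ℙ) (X := X) x
  have : LipschitzWith (K.toNNReal) fun t : Set.Icc (0:ℝ) T =>
      ∫ s in Set.Icc (0:ℝ) (t:ℝ), vel hT btilde ℙ X x s := by
    apply LipschitzWith.of_dist_le_mul
    intro t₁ t₂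
    rw [Subtype.dist_eq, Real.dist_eq, Real.coe_toNNReal K hK]
    rcases le_total (t₂:ℝ) (t₁:ℝ) with h | h
    · rw [abs_of_nonneg (by linarith)]
      exact prim_lipschitz hv hvb t₂.2.1 h
    · rw [dist_comm, abs_of_nonpos (by linarith), neg_sub]
      exact prim_lipschitz hv hvb t₁.2.1 h
  exact this.continuous

include hb hbdd hK in
lemma Tmap_apply (hX : Measurable X) (ξ : Ω → Euc d) (W : Ω → PathSpace d T) (ω : Ω)
    (t : Set.Icc (0:ℝ) T) :
    Tmap hT btilde ℙ ξ W X ω t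
      = ξ ω + W ω t + ∫ s in Set.Icc (0:ℝ) (t:ℝ), vel hT btilde ℙ X (X ω) s := by
  apply mkPath_apply
  exact (continuous_const.add (W ω).continuous).add (prim_cont hT hb hbdd hK hX (X ω))

include hb hbdd hK in
lemma evalAt_Tmap (hX : Measurable X) (ξ : Ω → Euc d) (W : Ω → PathSpace d T) (ω : Ω)
    {t : ℝ} (ht : t ∈ Set.Icc (0:ℝ) T) :
    evalAt hT t (Tmap hT btilde ℙ ξ W X ω)
      = ξ ω + evalAt hT t (W ω) + ∫ s in Set.Icc (0:ℝ) t, vel hT btilde ℙ X (X ω) s := by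
  rw [evalAt_of_mem hT ht, evalAt_of_mem hT ht, Tmap_apply hT hb hbdd hK hX ξ W ω ⟨t, ht⟩]

end lemmas2

section lemmas3

variable (hb : Continuous btilde) (hbdd : ∀ p, ‖btilde p‖ ≤ K)
  (hlip : ∀ p q, ‖btilde p - btilde q‖ ≤ Λ * dist p q) (hK : 0 ≤ K) (hΛ : 0 ≤ Λ)
  {X Y : Ω → PathSpace d T}

include hb hbdd hlip hΛ in
lemma vel_dist_le (hX : Measurable X) (hY : Measurable Y) (x y : PathSpace d T) (s : ℝ)
    {ρ : ℝ} (hρ : ∀ᵐ ω' ∂ℙ, dist (evalAt hT s (X ω')) (evalAt hT s (Y ω')) ≤ ρ) :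
    ‖vel hT btilde ℙ X x s - vel hT btilde ℙ Y y s‖
      ≤ Λ * (dist (evalAt hT s x) (evalAt hT s y) + ρ) :=
  drift_dist_le hT hb hbdd hlip hΛ hX hY _ _ s hρ

include hb hbdd in
lemma dist_prim_le (hX : Measurable X) (hY : Measurable Y) (x y : PathSpace d T)
    {t : ℝ} (h0 : 0 ≤ t) {g : ℝ → ℝ} (hg : Continuous g)
    (hgb : ∀ s, 0 ≤ s → s ≤ t → ‖vel hT btilde ℙ X x s - vel hT btilde ℙ Y y s‖ ≤ g s) :
    dist (∫ s in Set.Icc (0:ℝ) t, vel hT btilde ℙ X x s)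
      (∫ s in Set.Icc (0:ℝ) t, vel hT btilde ℙ Y y s) ≤ |∫ s in (0:ℝ)..t, g s| := by
  rw [setIcc_eq_interval h0, setIcc_eq_interval h0, dist_eq_norm,
    ← intervalIntegral.integral_sub
      ((vel_continuous (ℙ := ℙ) hT hb hbdd hX x).intervalIntegrable _ _)
      ((vel_continuous (ℙ := ℙ) hT hb hbdd hY y).intervalIntegrable _ _)]
  apply intervalIntegral.norm_integral_le_abs_of_norm_le _ (hg.intervalIntegrable _ _)
  rw [Set.uIoc_of_le h0]
  filter_upwards [ae_restrict_mem measurableSet_Ioc] with s hs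
  exact hgb s hs.1.le hs.2

/-- The Picard map as a continuous function of `(ξ ω, W ω, X ω)`. -/
def Gmap (hT : 0 ≤ T) (btilde : Euc d × Euc d → Euc d) (ℙ : Measure Ω)
    (X : Ω → PathSpace d T) (p : Euc d × PathSpace d T × PathSpace d T) : PathSpace d T :=
  mkPath fun t => p.1 + p.2.1 t + ∫ s in Set.Icc (0:ℝ) (t:ℝ), vel hT btilde ℙ X p.2.2 s

omit [IsProbabilityMeasure ℙ] in
lemma Tmap_eq_Gmap (ξ : Ω → Euc d) (W : Ω → PathSpace d T) (ω : Ω) :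
    Tmap hT btilde ℙ ξ W X ω = Gmap hT btilde ℙ X (ξ ω, W ω, X ω) := rfl

include hb hbdd hlip hK hΛ in
lemma lipschitz_Gmap (hX : Measurable X) :
    LipschitzWith (2 + Λ*T).toNNReal (Gmap hT btilde ℙ X) := by
  have h2 : (0:ℝ) ≤ 2 + Λ*T := by positivity
  apply LipschitzWith.of_dist_le_mul
  intro p q
  rw [Real.coe_toNNReal _ h2]
  have hd : (0:ℝ) ≤ (2 + Λ*T) * dist p q := mul_nonneg h2 dist_nonneg
  rw [ContinuousMap.dist_le hd]
  intro t
  have hcp : Continuous fun t : Set.Icc (0:ℝ) T =>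
      p.1 + p.2.1 t + ∫ s in Set.Icc (0:ℝ) (t:ℝ), vel hT btilde ℙ X p.2.2 s :=
    (continuous_const.add p.2.1.continuous).add (prim_cont hT hb hbdd hK hX p.2.2)
  have hcq : Continuous fun t : Set.Icc (0:ℝ) T =>
      q.1 + q.2.1 t + ∫ s in Set.Icc (0:ℝ) (t:ℝ), vel hT btilde ℙ X q.2.2 s :=
    (continuous_const.add q.2.1.continuous).add (prim_cont hT hb hbdd hK hX q.2.2)
  rw [Gmap, Gmap, mkPath_apply hcp, mkPath_apply hcq]
  have hP : dist (∫ s in Set.Icc (0:ℝ) (t:ℝ), vel hT btilde ℙ X p.2.2 s)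
      (∫ s in Set.Icc (0:ℝ) (t:ℝ), vel hT btilde ℙ X q.2.2 s) ≤ Λ * T * dist p q := by
    have := dist_prim_le (ℙ := ℙ) hT hb hbdd hX hX p.2.2 q.2.2 t.2.1
      (g := fun _ => Λ * dist p.2.2 q.2.2) continuous_const ?_
    · rw [intervalIntegral.integral_const, smul_eq_mul, sub_zero, abs_mul, abs_of_nonneg t.2.1,
        abs_of_nonneg (by positivity)] at this
      refine this.trans ?_
      have h1 : dist p.2.2 q.2.2 ≤ dist p q := by
        have a1 : dist p.2.2 q.2.2 ≤ dist p.2 q.2 := by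
          rw [Prod.dist_eq]; exact le_max_right _ _
        have a2 : dist p.2 q.2 ≤ dist p q := by rw [Prod.dist_eq]; exact le_max_right _ _
        exact a1.trans a2
      calc (t:ℝ) * (Λ * dist p.2.2 q.2.2) ≤ T * (Λ * dist p q) := by
            apply mul_le_mul t.2.2 (mul_le_mul_of_nonneg_left h1 hΛ) (by positivity)
              (le_trans t.2.1 t.2.2)
          _ = Λ * T * dist p q := by ring
    · intro s _ _
      have := vel_dist_le (ℙ := ℙ) hT hb hbdd hlip hΛ hX hX p.2.2 q.2.2 s
        (ρ := 0) (Filter.Eventually.of_forall fun ω' => by simp)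
      refine this.trans ?_
      rw [add_zero]
      exact mul_le_mul_of_nonneg_left (dist_evalAt_le hT s _ _) hΛ
  calc dist (p.1 + p.2.1 t + _) (q.1 + q.2.1 t + _)
      ≤ dist (p.1 + p.2.1 t) (q.1 + q.2.1 t)
        + dist (∫ s in Set.Icc (0:ℝ) (t:ℝ), vel hT btilde ℙ X p.2.2 s)
          (∫ s in Set.Icc (0:ℝ) (t:ℝ), vel hT btilde ℙ X q.2.2 s) := dist_add_add_le _ _ _ _
    _ ≤ (dist p.1 q.1 + dist (p.2.1 t) (q.2.1 t)) + Λ * T * dist p q :=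
        add_le_add (dist_add_add_le _ _ _ _) hP
    _ ≤ (dist p q + dist p q) + Λ * T * dist p q := by
        apply add_le_add (add_le_add ?_ ?_) le_rfl
        · rw [Prod.dist_eq]; exact le_max_left _ _
        · refine le_trans (ContinuousMap.dist_apply_le_dist t) ?_
          have a1 : dist p.2.1 q.2.1 ≤ dist p.2 q.2 := by
            rw [Prod.dist_eq]; exact le_max_left _ _
          have a2 : dist p.2 q.2 ≤ dist p q := by rw [Prod.dist_eq]; exact le_max_right _ _
          exact a1.trans a2
    _ = (2 + Λ*T) * dist p q := by ring
    
include hb hbdd hlip hK hΛ in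
lemma measurable_Tmap (hX : Measurable X) {ξ : Ω → Euc d} {W : Ω → PathSpace d T}
    (hξ : Measurable ξ) (hW : Measurable W) :
    Measurable (Tmap hT btilde ℙ ξ W X) := by
  have := (lipschitz_Gmap (ℙ := ℙ) hT hb hbdd hlip hK hΛ hX).continuous.measurable
  exact this.comp (hξ.prodMk (hW.prodMk hX))

end lemmas3

section lemmas4

variable (hb : Continuous btilde) (hbdd : ∀ p, ‖btilde p‖ ≤ K)
  (hlip : ∀ p q, ‖btilde p - btilde q‖ ≤ Λ * dist p q) (hK : 0 ≤ K) (hΛ : 0 ≤ Λ)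
  {X Y : Ω → PathSpace d T}

include hbdd in
lemma norm_prim_le (x : PathSpace d T) {t : ℝ} (h0 : 0 ≤ t) :
    ‖∫ s in Set.Icc (0:ℝ) t, vel hT btilde ℙ X x s‖ ≤ K * t := by
  rw [setIcc_eq_interval h0]
  have := intervalIntegral.norm_integral_le_of_norm_le_const (a := 0) (b := t) (C := K)
    (f := vel hT btilde ℙ X x) (fun s _ => vel_norm_le hT hbdd x s)
  rwa [sub_zero, abs_of_nonneg h0] at this

include hb hbdd hlip hK hΛ in
lemma dist_evalAt_Tmap_le (hX : Measurable X) (hY : Measurable Y)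
    (ξ : Ω → Euc d) (W : Ω → PathSpace d T) {g : ℝ → ℝ} (hg : Continuous g)
    (hbound : ∀ᵐ ω' ∂ℙ, ∀ t' ∈ Set.Icc (0:ℝ) T,
      dist (evalAt hT t' (X ω')) (evalAt hT t' (Y ω')) ≤ g t')
    (ω : Ω) (hbω : ∀ t' ∈ Set.Icc (0:ℝ) T,
      dist (evalAt hT t' (X ω)) (evalAt hT t' (Y ω)) ≤ g t')
    {t : ℝ} (ht : t ∈ Set.Icc (0:ℝ) T) :
    dist (evalAt hT t (Tmap hT btilde ℙ ξ W X ω)) (evalAt hT t (Tmap hT btilde ℙ ξ W Y ω))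
      ≤ |∫ s in (0:ℝ)..t, 2*Λ*(g s)| := by
  rw [evalAt_Tmap hT hb hbdd hK hX ξ W ω ht, evalAt_Tmap hT hb hbdd hK hY ξ W ω ht,
    dist_add_left]
  apply dist_prim_le hT hb hbdd hX hY _ _ ht.1 (continuous_const.mul hg)
  intro s hs0 hst
  have hsT : s ∈ Set.Icc (0:ℝ) T := ⟨hs0, hst.trans ht.2⟩
  have h1 := vel_dist_le (ℙ := ℙ) hT hb hbdd hlip hΛ hX hY (X ω) (Y ω) s
    (ρ := g s) (by filter_upwards [hbound] with ω' h using h s hsT)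
  refine h1.trans (le_of_le_of_eq ?_ (by ring : Λ * (g s + g s) = 2*Λ*(g s)))
  exact mul_le_mul_of_nonneg_left (add_le_add_left (hbω s hsT) _) hΛ

include hb in
lemma inner_integral_eq (hZ : Measurable X) (z : Euc d) (s : ℝ) :
    ∫ y, btilde (z, y) ∂((ℙ.map X).map (evalAt hT s)) = drift hT btilde ℙ X z s := by
  rw [Measure.map_map (measurable_evalAt hT s) hZ]
  have hfc : Continuous fun y : Euc d => btilde (z, y) :=
    hb.comp (continuous_const.prodMk continuous_id)
  rw [integral_map (((measurable_evalAt hT s).comp hZ).aemeasurable) hfc.aestronglyMeasurable]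
  rfl

omit [IsProbabilityMeasure ℙ] in
lemma Bstep (Λ C t : ℝ) (n : ℕ) :
    ∫ s in (0:ℝ)..t, 2*Λ*(C * (2*Λ)^n / (Nat.factorial (n+1) : ℝ) * s^(n+1))
      = C * (2*Λ)^(n+1) / (Nat.factorial (n+2) : ℝ) * t^(n+2) := by
  have h1 : (Nat.factorial (n+1) : ℝ) ≠ 0 := Nat.cast_ne_zero.mpr (Nat.factorial_ne_zero _)
  simp only [intervalIntegral.integral_const_mul, integral_pow]
  rw [Nat.factorial_succ (n+1)]
  rw [zero_pow (by omega : n+1+1 ≠ 0)]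
  push_cast
  field_simp
  ring

omit [IsProbabilityMeasure ℙ] in
lemma Bmono {C Λ T : ℝ} (hC : 0 ≤ C) (hΛ : 0 ≤ Λ) (hT : 0 ≤ T) {t : ℝ} (h0 : 0 ≤ t)
    (ht : t ≤ T) (n : ℕ) :
    C * (2*Λ)^n / (Nat.factorial (n+1) : ℝ) * t^(n+1)
      ≤ (C*T) * ((2*Λ*T)^n / (Nat.factorial n : ℝ)) := by
  have hfle : (Nat.factorial n : ℝ) ≤ (Nat.factorial (n+1) : ℝ) :=
    Nat.cast_le.mpr (Nat.factorial_le (Nat.le_succ n))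
  have hf0 : (0:ℝ) < (Nat.factorial n : ℝ) := Nat.cast_pos.mpr (Nat.factorial_pos n)
  calc C * (2*Λ)^n / (Nat.factorial (n+1) : ℝ) * t^(n+1)
      ≤ C * (2*Λ)^n / (Nat.factorial (n+1) : ℝ) * T^(n+1) := by
        apply mul_le_mul_of_nonneg_left (pow_le_pow_left₀ h0 ht _) (by positivity)
    _ ≤ C * (2*Λ)^n / (Nat.factorial n : ℝ) * T^(n+1) := by
        apply mul_le_mul_of_nonneg_right _ (by positivity)
        exact div_le_div_of_nonneg_left (by positivity) hf0 hfle
    _ = (C*T) * ((2*Λ*T)^n / (Nat.factorial n : ℝ)) := by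
        rw [mul_pow, mul_pow, pow_succ]
        ring

end lemmas4

end Szn

open Szn Filter Topology

/-- The truncated sup-distance `sup_{s ≤ t} |ω₁(s) − ω₂(s)|` of a pair of paths. -/
def pathDistSup {d : ℕ} {T : ℝ} (t : ℝ) (p : PathSpace d T × PathSpace d T) : ℝ :=
  ⨆ s : Set.Icc (0:ℝ) T, if (s : ℝ) ≤ t then dist (p.1 s) (p.2 s) else 0

/-- The truncated Wasserstein distance
`𝒲_t(μ,ν) = inf_π ∫ (sup_{s ≤ t} |ω₁(s) − ω₂(s)|) ∧ 1 dπ` over couplings `π` of `μ, ν`. -/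
def truncWass (d : ℕ) (T : ℝ) (t : ℝ) (μ ν : Measure (PathSpace d T)) : ℝ :=
  sInf { r : ℝ | ∃ π : Measure (PathSpace d T × PathSpace d T), IsProbabilityMeasure π ∧
    π.map Prod.fst = μ ∧ π.map Prod.snd = ν ∧
    r = ∫ p, min (pathDistSup t p) 1 ∂π }

/-- `X` solves, `ℙ`-a.s. and for all `t ∈ [0,T]`, the equation
`X_t = ξ + W_t + ∫₀ᵗ ( ∫ b̃(X_s, y) μ_s(dy) ) ds`, where `μ_s` is the time-`s` marginal of
the input measure `μ` on path space. -/
def SolvesSznitmanEq {d : ℕ} {T : ℝ} (hT : 0 ≤ T) (btilde : Euc d × Euc d → Euc d)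
    {Ω : Type} [MeasurableSpace Ω] (ℙ : Measure Ω) (ξ : Ω → Euc d) (W : Ω → PathSpace d T)
    (μ : Measure (PathSpace d T)) (X : Ω → PathSpace d T) : Prop :=
  ∀ᵐ ω ∂ℙ, ∀ t ∈ Set.Icc (0:ℝ) T,
    evalAt hT t (X ω) = ξ ω + evalAt hT t (W ω)
      + ∫ s in Set.Icc (0:ℝ) t, ∫ y, btilde (evalAt hT s (X ω), y) ∂(μ.map (evalAt hT s))

/-- **Sznitman's Theorem 1.1**: existence and uniqueness of a strong solution to the
McKean--Vlasov SDE `dX_t = (∫ b̃(X_t,y) 𝓛_{X_t}(dy)) dt + dW_t`, `X_0 = ξ`, where the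
drift depends on the law of the solution itself. -/
theorem stmt2 (d : ℕ) (hd : 1 ≤ d) (T : ℝ) (hT : 0 ≤ T)
    (btilde : Euc d × Euc d → Euc d) (K L : ℝ)
    (hbdd : ∀ p, ‖btilde p‖ ≤ K)
    (hlip : ∀ p q, ‖btilde p - btilde q‖ ≤ L * dist p q)
    {Ω : Type} [MeasurableSpace Ω] (ℙ : Measure Ω) [IsProbabilityMeasure ℙ]
    (W : Ω → PathSpace d T) (hW : Measurable W) (ξ : Ω → Euc d) (hξ : Measurable ξ) :
    ∃ X : Ω → PathSpace d T, Measurable X ∧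
      SolvesSznitmanEq hT btilde ℙ ξ W (ℙ.map X) X ∧
      ∀ X' : Ω → PathSpace d T, Measurable X' →
        SolvesSznitmanEq hT btilde ℙ ξ W (ℙ.map X') X' →
          ℙ.map X' = ℙ.map X ∧ ∀ᵐ ω ∂ℙ, X' ω = X ω := by
  classical
  set Λ : ℝ := max L 0 with hΛdef
  have hΛ : 0 ≤ Λ := le_max_right _ _
  have h2Λ : (0:ℝ) ≤ 2*Λ := by linarith
  have hlipΛ : ∀ p q, ‖btilde p - btilde q‖ ≤ Λ * dist p q := fun p q =>
    (hlip p q).trans (mul_le_mul_of_nonneg_right (le_max_left _ _) dist_nonneg)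
  have hK : 0 ≤ K := le_trans (norm_nonneg _) (hbdd (0, 0))
  have hb : Continuous btilde := by
    have : LipschitzWith Λ.toNNReal btilde := by
      apply LipschitzWith.of_dist_le_mul
      intro p q
      rw [Real.coe_toNNReal _ hΛ, dist_eq_norm]
      exact hlipΛ p q
    exact this.continuous
  have hBnn' : ∀ (C t : ℝ), 0 ≤ C → 0 ≤ t → ∀ n : ℕ,
      0 ≤ C*(2*Λ)^n/(Nat.factorial (n+1):ℝ)*t^(n+1) := by
    intro C t hC ht0 n
    apply mul_nonneg _ (pow_nonneg ht0 _)
    exact div_nonneg (mul_nonneg hC (pow_nonneg h2Λ n)) (Nat.cast_nonneg _)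
  -- zeroth iterate
  set btilde0 : Euc d × Euc d → Euc d := fun _ => 0 with hbt0
  have hb0 : Continuous btilde0 := continuous_const
  have hbdd0 : ∀ p, ‖btilde0 p‖ ≤ K := fun p => by simp [hbt0, hK]
  have hlip0 : ∀ p q, ‖btilde0 p - btilde0 q‖ ≤ Λ * dist p q := fun p q => by
    simp [hbt0]
    exact mul_nonneg hΛ dist_nonneg
  set cp : Ω → PathSpace d T := fun _ => ContinuousMap.const _ 0 with hcp
  have hcpm : Measurable cp := measurable_const
  set X0 : Ω → PathSpace d T := Tmap hT btilde0 ℙ ξ W cp with hX0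
  have hX0m : Measurable X0 := measurable_Tmap hT hb0 hbdd0 hlip0 hK hΛ hcpm hξ hW
  have hX0eval : ∀ ω {t : ℝ}, t ∈ Set.Icc (0:ℝ) T →
      evalAt hT t (X0 ω) = ξ ω + evalAt hT t (W ω) := by
    intro ω t ht
    rw [hX0, evalAt_Tmap hT hb0 hbdd0 hK hcpm ξ W ω ht]
    simp [vel, drift, hbt0]
  -- the Picard iterates
  set Xs : ℕ → Ω → PathSpace d T :=
    fun n => Nat.rec X0 (fun _ Xp => Tmap hT btilde ℙ ξ W Xp) n with hXs
  have hXs0 : Xs 0 = X0 := rfl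
  have hXsS : ∀ n, Xs (n+1) = Tmap hT btilde ℙ ξ W (Xs n) := fun n => rfl
  have hXsm : ∀ n, Measurable (Xs n) := by
    intro n; induction n with
    | zero => exact hX0m
    | succ n ih => exact measurable_Tmap hT hb hbdd hlipΛ hK hΛ ih hξ hW
  -- the pointwise bounds
  have hbnd : ∀ n (ω : Ω), ∀ t ∈ Set.Icc (0:ℝ) T,
      dist (evalAt hT t (Xs (n+1) ω)) (evalAt hT t (Xs n ω))
        ≤ K * (2*Λ)^n / (Nat.factorial (n+1) : ℝ) * t^(n+1) := by
    intro n
    induction n with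
    | zero =>
      intro ω t ht
      rw [hXsS 0, hXs0, evalAt_Tmap hT hb hbdd hK hX0m ξ W ω ht, hX0eval ω ht,
        dist_eq_norm, add_sub_cancel_left]
      have h1 := norm_prim_le (ℙ := ℙ) (X := X0) hT hbdd (X0 ω) ht.1
      refine h1.trans (le_of_eq ?_)
      simp [Nat.factorial]
    | succ n ih =>
      intro ω t ht
      have h := dist_evalAt_Tmap_le (ℙ := ℙ) hT hb hbdd hlipΛ hK hΛ (hXsm (n+1)) (hXsm n) ξ W
        (g := fun s => K * (2*Λ)^n / (Nat.factorial (n+1) : ℝ) * s^(n+1))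
        (continuous_const.mul (continuous_pow _))
        (Filter.Eventually.of_forall fun ω' => ih ω') ω (ih ω) ht
      refine h.trans (le_of_eq ?_)
      rw [Bstep]
      exact abs_of_nonneg (hBnn' K t hK ht.1 (n+1))
  -- path-level bounds, Cauchy, limit
  haveI : Nonempty (Set.Icc (0:ℝ) T) := ⟨⟨0, le_refl 0, hT⟩⟩
  set a : ℕ → ℝ := fun n => (K*T) * ((2*Λ*T)^n / (Nat.factorial n : ℝ)) with ha
  have hann : ∀ n, 0 ≤ a n := by
    intro n
    apply mul_nonneg (mul_nonneg hK hT)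
    exact div_nonneg (pow_nonneg (mul_nonneg h2Λ hT) n) (Nat.cast_nonneg _)
  have hasum : Summable a := (Real.summable_pow_div_factorial (2*Λ*T)).mul_left (K*T)
  have hpath : ∀ n ω, dist (Xs (n+1) ω) (Xs n ω) ≤ a n := by
    intro n ω
    rw [ContinuousMap.dist_le (hann n)]
    intro u
    have h1 := hbnd n ω u u.2
    rw [evalAt_of_mem hT u.2, evalAt_of_mem hT u.2] at h1
    simp only [Subtype.coe_eta] at h1
    exact h1.trans (Bmono hK hΛ hT u.2.1 u.2.2 n)
  have hcauchy : ∀ ω, CauchySeq fun n => Xs n ω := fun ω =>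
    cauchySeq_of_dist_le_of_summable a (fun n => by rw [dist_comm]; exact hpath n ω) hasum
  choose Xl hXl using fun ω => cauchySeq_tendsto_of_complete (hcauchy ω)
  have hXlm : Measurable Xl :=
    measurable_of_tendsto_metrizable' atTop hXsm (tendsto_pi_nhds.mpr hXl)
  set tail : ℕ → ℝ := fun n => ∑' m, a (n + m) with htaildef
  have htail : ∀ n ω, dist (Xs n ω) (Xl ω) ≤ tail n := fun n ω =>
    dist_le_tsum_of_dist_le_of_tendsto a (fun k => by rw [dist_comm]; exact hpath k ω)
      hasum (hXl ω) n
  have htailnn : ∀ n, 0 ≤ tail n := fun n => tsum_nonneg fun m => hann _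
  have htail0 : Tendsto tail atTop (𝓝 0) := by
    have h1 := tendsto_sum_nat_add a
    have he : tail = fun i => ∑' k, a (k + i) :=
      funext fun i => tsum_congr fun k => by rw [add_comm]
    rw [he]; exact h1
  -- the fixed point property
  have hfix : ∀ ω, Tmap hT btilde ℙ ξ W Xl ω = Xl ω := by
    intro ω
    have key : ∀ n, dist (Tmap hT btilde ℙ ξ W Xl ω) (Xl ω)
        ≤ 2*Λ*T * tail n + tail (n+1) := by
      intro n
      have h1 : dist (Tmap hT btilde ℙ ξ W Xl ω) (Tmap hT btilde ℙ ξ W (Xs n) ω)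
          ≤ 2*Λ*T * tail n := by
        rw [ContinuousMap.dist_le (mul_nonneg (mul_nonneg h2Λ hT) (htailnn n))]
        intro u
        have hb1 : ∀ (ω' : Ω), ∀ t' ∈ Set.Icc (0:ℝ) T,
            dist (evalAt hT t' (Xl ω')) (evalAt hT t' (Xs n ω')) ≤ tail n := by
          intro ω' t' _
          refine (dist_evalAt_le hT t' _ _).trans ?_
          rw [dist_comm]; exact htail n ω'
        have hd := dist_evalAt_Tmap_le (ℙ := ℙ) hT hb hbdd hlipΛ hK hΛ hXlm (hXsm n) ξ W
          (g := fun _ => tail n) continuous_const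
          (Filter.Eventually.of_forall hb1) ω (hb1 ω) u.2
        rw [evalAt_of_mem hT u.2, evalAt_of_mem hT u.2] at hd
        simp only [Subtype.coe_eta] at hd
        refine hd.trans ?_
        rw [intervalIntegral.integral_const, smul_eq_mul, sub_zero, abs_mul,
          abs_of_nonneg u.2.1, abs_of_nonneg (mul_nonneg h2Λ (htailnn n))]
        calc (u:ℝ) * (2*Λ*tail n) ≤ T * (2*Λ*tail n) :=
              mul_le_mul_of_nonneg_right u.2.2 (mul_nonneg h2Λ (htailnn n))
          _ = 2*Λ*T * tail n := by ring
      have h2 : dist (Tmap hT btilde ℙ ξ W (Xs n) ω) (Xl ω) ≤ tail (n+1) := htail (n+1) ω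
      exact le_trans (dist_triangle _ _ _) (add_le_add h1 h2)
    have hlim : Tendsto (fun n => 2*Λ*T * tail n + tail (n+1)) atTop (𝓝 0) := by
      have l1 := htail0.const_mul (2*Λ*T)
      have l2 := htail0.comp (tendsto_add_atTop_nat 1)
      have := l1.add l2
      simpa using this
    have hd0 : dist (Tmap hT btilde ℙ ξ W Xl ω) (Xl ω) ≤ 0 :=
      ge_of_tendsto hlim (Filter.Eventually.of_forall key)
    exact dist_le_zero.mp (le_antisymm hd0 dist_nonneg).le
  have hXeq : ∀ (ω : Ω), ∀ t ∈ Set.Icc (0:ℝ) T, evalAt hT t (Xl ω)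
      = ξ ω + evalAt hT t (W ω) + ∫ s in Set.Icc (0:ℝ) t, vel hT btilde ℙ Xl (Xl ω) s := by
    intro ω t ht
    conv_lhs => rw [← hfix ω]
    exact evalAt_Tmap hT hb hbdd hK hXlm ξ W ω ht
  refine ⟨Xl, hXlm, ?_, ?_⟩
  · unfold SolvesSznitmanEq
    apply Filter.Eventually.of_forall
    intro ω t ht
    rw [hXeq ω t ht]
    congr 1
    simp only [inner_integral_eq hT hb hXlm, vel]
  · intro X' hX'm hsol'
    unfold SolvesSznitmanEq at hsol'
    have hsol2 : ∀ᵐ ω ∂ℙ, ∀ t ∈ Set.Icc (0:ℝ) T, evalAt hT t (X' ω)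
        = ξ ω + evalAt hT t (W ω) + ∫ s in Set.Icc (0:ℝ) t, vel hT btilde ℙ X' (X' ω) s := by
      filter_upwards [hsol'] with ω h
      intro t ht
      rw [h t ht]
      congr 1
      simp only [inner_integral_eq hT hb hX'm, vel]
    have claim : ∀ n : ℕ, ∀ᵐ ω ∂ℙ, ∀ t ∈ Set.Icc (0:ℝ) T,
        dist (evalAt hT t (X' ω)) (evalAt hT t (Xl ω))
          ≤ (2*K) * (2*Λ)^n / (Nat.factorial (n+1) : ℝ) * t^(n+1) := by
      intro n
      induction n with
      | zero =>
        filter_upwards [hsol2] with ω hω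
        intro t ht
        rw [hω t ht, hXeq ω t ht, dist_add_left, dist_eq_norm]
        have h1 := norm_prim_le (ℙ := ℙ) (X := X') hT hbdd (X' ω) ht.1
        have h2 := norm_prim_le (ℙ := ℙ) (X := Xl) hT hbdd (Xl ω) ht.1
        refine le_trans (norm_sub_le _ _) (le_of_le_of_eq (add_le_add h1 h2) ?_)
        simp [Nat.factorial]
        ring
      | succ n ih =>
        filter_upwards [hsol2, ih] with ω hω hωn
        intro t ht
        rw [hω t ht, hXeq ω t ht, dist_add_left]
        have hd := dist_prim_le (ℙ := ℙ) hT hb hbdd hX'm hXlm (X' ω) (Xl ω) ht.1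
          (g := fun s => 2*Λ*((2*K) * (2*Λ)^n / (Nat.factorial (n+1) : ℝ) * s^(n+1)))
          (continuous_const.mul (continuous_const.mul (continuous_pow _))) ?_
        · refine hd.trans (le_of_eq ?_)
          rw [Bstep]
          exact abs_of_nonneg (hBnn' (2*K) t (by linarith) ht.1 (n+1))
        · intro s hs0 hst
          have hsT : s ∈ Set.Icc (0:ℝ) T := ⟨hs0, hst.trans ht.2⟩
          have h1 := vel_dist_le (ℙ := ℙ) hT hb hbdd hlipΛ hΛ hX'm hXlm (X' ω) (Xl ω) s
            (ρ := (2*K) * (2*Λ)^n / (Nat.factorial (n+1) : ℝ) * s^(n+1))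
            (by filter_upwards [ih] with ω' h' using h' s hsT)
          have he : Λ * (((2*K) * (2*Λ)^n / (Nat.factorial (n+1) : ℝ) * s^(n+1))
              + ((2*K) * (2*Λ)^n / (Nat.factorial (n+1) : ℝ) * s^(n+1)))
              = 2*Λ*((2*K) * (2*Λ)^n / (Nat.factorial (n+1) : ℝ) * s^(n+1)) := by ring
          refine h1.trans (le_of_le_of_eq ?_ he)
          exact mul_le_mul_of_nonneg_left (add_le_add_left (hωn s hsT) _) hΛ
    have hall : ∀ᵐ ω ∂ℙ, ∀ n : ℕ, ∀ t ∈ Set.Icc (0:ℝ) T,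
        dist (evalAt hT t (X' ω)) (evalAt hT t (Xl ω))
          ≤ (2*K) * (2*Λ)^n / (Nat.factorial (n+1) : ℝ) * t^(n+1) := ae_all_iff.mpr claim
    have heq : ∀ᵐ ω ∂ℙ, X' ω = Xl ω := by
      filter_upwards [hall] with ω hω
      apply ContinuousMap.ext
      intro u
      have hu : (u:ℝ) ∈ Set.Icc (0:ℝ) T := u.2
      have hlim : Tendsto (fun n : ℕ =>
          (2*K) * (2*Λ)^n / (Nat.factorial (n+1) : ℝ) * (u:ℝ)^(n+1)) atTop (𝓝 0) := by
        apply squeeze_zero (fun n => hBnn' (2*K) u (by linarith) u.2.1 n)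
          (fun n => Bmono (by linarith : (0:ℝ) ≤ 2*K) hΛ hT u.2.1 u.2.2 n)
        have := (Real.summable_pow_div_factorial (2*Λ*T)).tendsto_atTop_zero.const_mul (2*K*T)
        simpa using this
      have hd : dist (evalAt hT u (X' ω)) (evalAt hT u (Xl ω)) ≤ 0 :=
        ge_of_tendsto hlim (Filter.Eventually.of_forall fun n => hω n u hu)
      have h0 := dist_le_zero.mp hd
      rw [evalAt_of_mem hT hu, evalAt_of_mem hT hu] at h0
      simpa only [Subtype.coe_eta] using h0
    exact ⟨Measure.map_congr heq, heq⟩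


end
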